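/- Let D_n = ⟨r, s | r^n, s^2, (rs)^2⟩ with 4 | n, and H = ⟨s⟩. Then D_n/H is 2-divisible with δ₂(D_n/H) = 2. -/

import Mathlib

open DihedralGroup

def LDiv (ℓ : ℕ) {G : Type*} [Group G] (H : Subgroup G) (δ : ℕ) : Prop :=
  ∃ Gs : Fin δ → Subgroup G,
    (∀ i, H ≤ Gs i) ∧
    ∀ σ : G, σ ∉ H → orderOf σ = ℓ →
      ∃ i : Fin δ, ∃ τ : G, IsConj σ τ ∧ τ ∈ Gs i ∧
        ∀ π ∈ Gs i, π * τ * π⁻¹ ∉ H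

namespace Stmt7Aux

variable {n : ℕ}

lemma mem_H_iff (x : DihedralGroup n) :
    x ∈ Subgroup.zpowers (sr (0 : ZMod n)) ↔ x = 1 ∨ x = sr 0 := by
  constructor
  · rintro ⟨k, rfl⟩
    have h2 : (sr (0 : ZMod n)) ^ (2 : ℤ) = 1 := by
      rw [zpow_two, sr_mul_sr, sub_self, one_def]
    rcases Int.even_or_odd k with ⟨j, rfl⟩ | ⟨j, rfl⟩
    · left
      show sr (0 : ZMod n) ^ (j + j) = 1
      rw [show j + j = 2 * j by ring, zpow_mul, h2, one_zpow]
    · right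
      show sr (0 : ZMod n) ^ (2 * j + 1) = sr 0
      rw [zpow_add, zpow_mul, h2, one_zpow, one_mul, zpow_one]
  · rintro (rfl | rfl)
    · exact Subgroup.one_mem _
    · exact Subgroup.mem_zpowers _

lemma inv_r (i : ZMod n) : (r i)⁻¹ = r (-i) := rfl

lemma inv_sr (i : ZMod n) : (sr i)⁻¹ = sr i := rfl

lemma sr_eq_mul (a : ZMod n) : r a = sr 0 * sr a := by simp

/-- The Klein four subgroup `{1, r m, sr 0, sr m}` when `m + m = 0`. -/
def Ksub (m : ZMod n) (hm : m + m = 0) : Subgroup (DihedralGroup n) where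
  carrier := {r 0, r m, sr 0, sr m}
  one_mem' := Or.inl rfl
  mul_mem' := by
    have hneg : -m = m := by linear_combination -hm
    rintro x y (rfl | rfl | rfl | rfl) (rfl | rfl | rfl | rfl) <;>
      simp [Set.mem_insert_iff, sub_zero, zero_sub, hneg, show m + m = 0 from hm] <;> tauto
  inv_mem' := by
    have hneg : -m = m := by linear_combination -hm
    rintro x (rfl | rfl | rfl | rfl) <;>
      simp [Set.mem_insert_iff, inv_r, inv_sr, hneg] <;> tauto

lemma mem_Ksub {m : ZMod n} {hm : m + m = 0} {x : DihedralGroup n} :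
    x ∈ Ksub m hm ↔ x = r 0 ∨ x = r m ∨ x = sr 0 ∨ x = sr m := by
  simp [Ksub, Subgroup.mem_mk, Set.mem_insert_iff]

lemma two_mul_ne_one (h2 : 2 ∣ n) (k : ZMod n) : 2 * k ≠ 1 := by
  intro h
  have := congrArg (ZMod.castHom h2 (ZMod 2)) h
  rw [map_mul, map_one, map_ofNat, show ((2 : ZMod 2)) = 0 from rfl, zero_mul] at this
  exact zero_ne_one this

end Stmt7Aux

open Stmt7Aux

set_option maxHeartbeats 1000000 in
/-- If `4 ∣ n`, then `D_n/⟨s⟩` is 2-divisible with `δ₂(D_n/⟨s⟩) = 2`. -/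
theorem stmt7 (n : ℕ) (hn : 0 < n) (h4 : 4 ∣ n) :
    LDiv 2 (Subgroup.zpowers (sr (0 : ZMod n))) 2 ∧
      sInf {δ | LDiv 2 (Subgroup.zpowers (sr (0 : ZMod n))) δ} = 2 := by
  obtain ⟨q, rfl⟩ := h4
  have hq : 0 < q := by omega
  haveI : NeZero (4 * q) := ⟨by omega⟩
  obtain ⟨M, hMdef⟩ : ∃ M : ZMod (4 * q), M = ((2 * q : ℕ) : ZMod (4 * q)) := ⟨_, rfl⟩
  have hM2 : M + M = 0 := by
    rw [hMdef, ← Nat.cast_add, show 2 * q + 2 * q = 4 * q by ring, ZMod.natCast_self]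
  have hnegM : -M = M := by linear_combination -hM2
  have hMne : M ≠ 0 := by
    rw [hMdef, Ne, ZMod.natCast_eq_zero_iff]
    intro hdvd
    have := Nat.le_of_dvd (by omega) hdvd
    omega
  have hv : ∀ j : ZMod (4 * q), ((j.val : ℕ) : ZMod (4 * q)) = j := by
    intro j; rw [ZMod.natCast_val, ZMod.cast_id]
  have part1 : LDiv 2 (Subgroup.zpowers (sr (0 : ZMod (4 * q)))) 2 := by
    refine ⟨![Ksub M hM2, ⊤], ?_, ?_⟩
    · intro i
      fin_cases i
      · intro x hx
        simp only [Matrix.cons_val_zero]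
        rcases (mem_H_iff x).mp hx with rfl | rfl
        · exact one_mem _
        · exact (mem_Ksub (hm := hM2)).mpr (Or.inr (Or.inr (Or.inl rfl)))
      · intro x _; exact Subgroup.mem_top _
    · intro σ hσH hσ2
      match σ with
      | DihedralGroup.r j =>
        have hj : j ≠ 0 := by
          rintro rfl
          exact hσH ((mem_H_iff _).mpr (Or.inl rfl))
        refine ⟨1, r j, IsConj.refl _, Subgroup.mem_top _, ?_⟩
        intro π _
        rcases π with k | k
        · have he : r k * r j * (r k)⁻¹ = r j := by
            rw [Stmt7Aux.inv_r]; simp only [r_mul_r]; congr 1; ring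
          rw [he, mem_H_iff]
          rintro (h | h)
          · rw [one_def] at h
            exact hj (by injection h)
          · exact absurd h (by simp)
        · have he : sr k * r j * (sr k)⁻¹ = r (-j) := by
            rw [Stmt7Aux.inv_sr]; simp only [sr_mul_r, sr_mul_sr]; congr 1; ring
          rw [he, mem_H_iff]
          rintro (h | h)
          · rw [one_def] at h
            have : -j = 0 := by injection h
            exact hj (by linear_combination -this)
          · exact absurd h (by simp)
      | DihedralGroup.sr j =>
        have hj : j ≠ 0 := by
          rintro rfl
          exact hσH ((mem_H_iff _).mpr (Or.inr rfl))
        rcases Nat.even_or_odd j.val with ⟨c, hc⟩ | ⟨c, hc⟩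
        · -- even reflection: conjugate into the Klein group
          have hjc : j = ((c : ZMod (4 * q)) + (c : ZMod (4 * q))) := by
            rw [← hv j, hc]; push_cast; ring
          refine ⟨0, sr M, ?_, ?_, ?_⟩
          · rw [isConj_iff]
            refine ⟨r ((c : ZMod (4 * q)) - ((q : ℕ) : ZMod (4 * q))), ?_⟩
            rw [Stmt7Aux.inv_r]; simp only [r_mul_sr, sr_mul_r]
            congr 1
            rw [hjc, hMdef]; push_cast; ring
          · exact (mem_Ksub (hm := hM2)).mpr (Or.inr (Or.inr (Or.inr rfl)))
          · intro π hπ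
            have hgoal : ∀ x : DihedralGroup (4 * q), x = sr M →
                x ∉ Subgroup.zpowers (sr (0 : ZMod (4 * q))) := by
              rintro x rfl hx
              rcases (mem_H_iff _).mp hx with h | h
              · rw [one_def] at h; exact absurd h (by intro h'; cases h')
              · exact hMne (by injection h)
            rcases (mem_Ksub (m := M) (hm := hM2)).mp hπ with rfl | rfl | rfl | rfl
            · have he : r 0 * sr M * (r 0)⁻¹ = sr M := by
                rw [Stmt7Aux.inv_r]; simp only [r_mul_sr, sr_mul_r]; congr 1; ring
              rw [he]; exact hgoal _ rfl
            · have he : r M * sr M * (r M)⁻¹ = sr M := by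
                rw [Stmt7Aux.inv_r]; simp only [r_mul_sr, sr_mul_r]; congr 1
                linear_combination -hM2
              rw [he]; exact hgoal _ rfl
            · have he : sr 0 * sr M * (sr 0)⁻¹ = sr M := by
                rw [Stmt7Aux.inv_sr]; simp only [sr_mul_sr, r_mul_sr]; congr 1
                linear_combination -hM2
              rw [he]; exact hgoal _ rfl
            · have he : sr M * sr M * (sr M)⁻¹ = sr M := by
                rw [Stmt7Aux.inv_sr]; simp only [sr_mul_sr, r_mul_sr]; congr 1
                first | ring | linear_combination hM2 | linear_combination -hM2
              rw [he]; exact hgoal _ rfl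
        · -- odd reflection: conjugate to sr 1, use the top subgroup
          have h2d : 2 ∣ 4 * q := ⟨2 * q, by ring⟩
          refine ⟨1, sr 1, ?_, Subgroup.mem_top _, ?_⟩
          · rw [isConj_iff]
            refine ⟨r ((c : ZMod (4 * q))), ?_⟩
            rw [Stmt7Aux.inv_r]; simp only [r_mul_sr, sr_mul_r]
            congr 1
            rw [← hv j, hc]; push_cast; ring
          · intro π _
            rcases π with k | k
            · have he : r k * sr 1 * (r k)⁻¹ = sr (1 - 2 * k) := by
                rw [Stmt7Aux.inv_r]; simp only [r_mul_sr, sr_mul_r]; congr 1; ring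
              rw [he, mem_H_iff]
              rintro (h | h)
              · rw [one_def] at h; exact absurd h (by intro h'; cases h')
              · have h0 : 1 - 2 * k = 0 := by injection h
                exact two_mul_ne_one h2d k (by linear_combination -h0)
            · have he : sr k * sr 1 * (sr k)⁻¹ = sr (2 * k - 1) := by
                rw [Stmt7Aux.inv_sr]; simp only [sr_mul_sr, r_mul_sr]; congr 1; ring
              rw [he, mem_H_iff]
              rintro (h | h)
              · rw [one_def] at h; exact absurd h (by intro h'; cases h')
              · have h0 : 2 * k - 1 = 0 := by injection h
                exact two_mul_ne_one h2d k (by linear_combination h0)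
  refine ⟨part1, ?_⟩
  set S : Set ℕ := {δ | LDiv 2 (Subgroup.zpowers (sr (0 : ZMod (4 * q)))) δ} with hS
  haveI : Fact (1 < 4 * q) := ⟨by omega⟩
  have h1ne : (1 : ZMod (4 * q)) ≠ 0 := one_ne_zero
  have h2ne : (2 : ZMod (4 * q)) ≠ 0 := by
    intro h
    rw [show (2 : ZMod (4 * q)) = ((2 : ℕ) : ZMod (4 * q)) by norm_cast,
      ZMod.natCast_eq_zero_iff] at h
    have := Nat.le_of_dvd (by norm_num) h
    omega
  have hsr1H : sr (1 : ZMod (4 * q)) ∉ Subgroup.zpowers (sr (0 : ZMod (4 * q))) := by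
    rw [mem_H_iff]
    rintro (h | h)
    · rw [one_def] at h; exact absurd h (by intro h'; cases h')
    · exact h1ne (by injection h)
  have hsr2H : sr (2 : ZMod (4 * q)) ∉ Subgroup.zpowers (sr (0 : ZMod (4 * q))) := by
    rw [mem_H_iff]
    rintro (h | h)
    · rw [one_def] at h; exact absurd h (by intro h'; cases h')
    · exact h2ne (by injection h)
  have h0S : (0 : ℕ) ∉ S := by
    rintro ⟨Gs, -, hmain⟩
    obtain ⟨i, -⟩ := hmain (sr 1) hsr1H (orderOf_sr 1)
    exact i.elim0
  have h1S : (1 : ℕ) ∉ S := by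
    rintro ⟨Gs, hle, hmain⟩
    have hsr0 : sr (0 : ZMod (4 * q)) ∈ Gs 0 := hle 0 (Subgroup.mem_zpowers _)
    obtain ⟨i₁, τ₁, hc₁, hm₁, hcond₁⟩ := hmain (sr 1) hsr1H (orderOf_sr 1)
    obtain ⟨i₂, τ₂, hc₂, hm₂, hcond₂⟩ := hmain (sr 2) hsr2H (orderOf_sr 2)
    obtain rfl : i₁ = 0 := Subsingleton.elim _ _
    obtain rfl : i₂ = 0 := Subsingleton.elim _ _
    obtain ⟨A, hAodd, hAτ⟩ : ∃ A : ℤ, Odd A ∧ τ₁ = sr ((A : ZMod (4 * q))) := by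
      obtain ⟨π, hπ⟩ := isConj_iff.mp hc₁
      rcases π with k | k
      · refine ⟨1 - 2 * (k.val : ℤ), ⟨-(k.val : ℤ), by ring⟩, ?_⟩
        rw [← hπ, Stmt7Aux.inv_r]; simp only [r_mul_sr, sr_mul_r]
        have hcast : (((1 - 2 * (k.val : ℤ)) : ℤ) : ZMod (4 * q)) = 1 - 2 * k := by
          push_cast [hv]; ring
        rw [hcast]; congr 1; ring
      · refine ⟨2 * (k.val : ℤ) - 1, ⟨(k.val : ℤ) - 1, by ring⟩, ?_⟩
        rw [← hπ, Stmt7Aux.inv_sr]; simp only [sr_mul_sr, r_mul_sr]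
        have hcast : (((2 * (k.val : ℤ) - 1) : ℤ) : ZMod (4 * q)) = 2 * k - 1 := by
          push_cast [hv]; ring
        rw [hcast]; congr 1; ring
    obtain ⟨C, hCτ⟩ : ∃ C : ℤ, τ₂ = sr (((2 * C : ℤ) : ℤ) : ZMod (4 * q)) := by
      obtain ⟨π, hπ⟩ := isConj_iff.mp hc₂
      rcases π with k | k
      · refine ⟨1 - (k.val : ℤ), ?_⟩
        rw [← hπ, Stmt7Aux.inv_r]; simp only [r_mul_sr, sr_mul_r]
        have hcast : (((2 * (1 - (k.val : ℤ))) : ℤ) : ZMod (4 * q)) = 2 - 2 * k := by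
          push_cast [hv]; ring
        rw [hcast]; congr 1; ring
      · refine ⟨(k.val : ℤ) - 1, ?_⟩
        rw [← hπ, Stmt7Aux.inv_sr]; simp only [sr_mul_sr, r_mul_sr]
        have hcast : (((2 * ((k.val : ℤ) - 1)) : ℤ) : ZMod (4 * q)) = 2 * k - 2 := by
          push_cast [hv]; ring
        rw [hcast]; congr 1; ring
    have hmemr : ∀ x : ZMod (4 * q), sr x ∈ Gs 0 → r x ∈ Gs 0 := by
      intro x hx
      have hx0 : r x = sr 0 * sr x := by rw [sr_mul_sr, sub_zero]
      rw [hx0]; exact mul_mem hsr0 hx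
    let R' : AddSubgroup ℤ :=
      { carrier := {m : ℤ | r ((m : ZMod (4 * q))) ∈ Gs 0}
        zero_mem' := by
          have h0 : r (((0 : ℤ) : ZMod (4 * q))) = 1 := by push_cast; rw [one_def]
          simp only [Set.mem_setOf_eq, h0]
          exact (Gs 0).one_mem
        add_mem' := by
          intro a b ha hb
          simp only [Set.mem_setOf_eq] at ha hb ⊢
          have h0 : r (((a + b : ℤ) : ZMod (4 * q))) =
              r ((a : ZMod (4 * q))) * r ((b : ZMod (4 * q))) := by
            rw [r_mul_r]; push_cast; ring_nf
          rw [h0]; exact mul_mem ha hb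
        neg_mem' := by
          intro a ha
          simp only [Set.mem_setOf_eq] at ha ⊢
          have h0 : r (((-a : ℤ) : ZMod (4 * q))) = (r ((a : ZMod (4 * q))))⁻¹ := by
            rw [Stmt7Aux.inv_r]; push_cast; ring_nf
          rw [h0]; exact inv_mem ha }
    obtain ⟨d, hd⟩ := Int.subgroup_cyclic R'
    have hAmem : A ∈ R' := by
      show r ((A : ZMod (4 * q))) ∈ Gs 0
      exact hmemr _ (hAτ ▸ hm₁)
    have hCmem : (2 * C : ℤ) ∈ R' := by
      show r (((2 * C : ℤ) : ZMod (4 * q))) ∈ Gs 0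
      exact hmemr _ (hCτ ▸ hm₂)
    rw [hd, AddSubgroup.mem_closure_singleton] at hAmem hCmem
    obtain ⟨u, hu⟩ := hAmem
    obtain ⟨w, hw⟩ := hCmem
    simp only [zsmul_eq_mul, Int.cast_id] at hu hw
    have hdodd : Odd d := by
      rcases Int.even_or_odd d with hd2 | hd2
      · have hAeven : Even A := hu ▸ (Int.even_mul.mpr (Or.inr hd2) : Even (u * d))
        exact absurd hAodd (Int.not_odd_iff_even.mpr hAeven)
      · exact hd2
    have hwEven : Even w := by
      have h2C : Even ((2 : ℤ) * C) := ⟨C, by ring⟩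
      rw [← hw] at h2C
      rcases Int.even_mul.mp h2C with h | h
      · exact h
      · exact absurd hdodd (Int.not_odd_iff_even.mpr h)
    obtain ⟨t, ht⟩ := hwEven
    have hCd : C = t * d := by
      have h2 : 2 * C = 2 * (t * d) := by rw [← hw, ht]; ring
      exact mul_left_cancel₀ (by norm_num) h2
    have hCmem' : C ∈ R' := by
      rw [hd, AddSubgroup.mem_closure_singleton]
      refine ⟨t, ?_⟩
      simp only [zsmul_eq_mul, Int.cast_id]
      exact hCd.symm
    have hπG : r ((C : ZMod (4 * q))) ∈ Gs 0 := hCmem'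
    refine hcond₂ _ hπG ?_
    rw [hCτ, Stmt7Aux.inv_r]; simp only [r_mul_sr, sr_mul_r]
    refine (mem_H_iff _).mpr (Or.inr ?_)
    congr 1
    push_cast
    ring
  have hne : S.Nonempty := ⟨2, part1⟩
  have hmem := Nat.sInf_mem hne
  have hle2 : sInf S ≤ 2 := Nat.sInf_le part1
  obtain h | h | h : sInf S = 0 ∨ sInf S = 1 ∨ sInf S = 2 := by omega
  · exact absurd (h ▸ hmem) h0S
  · exact absurd (h ▸ hmem) h1S
  · exact h
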